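/- arXiv:1602.02787 — 5 statements merged into one kernel-verified Lean document; each statement's English description precedes it below -/
import Mathlib

section
/- Let f₀, f₁, ..., fₙ be a sequence of real polynomials such that (1) f₀ is a nonzero constant, and (2) whenever fₖ(x₀) = 0 for some 0 < k < n and real x₀, we have f_{k-1}(x₀) · f_{k+1}(x₀) < 0. Then fₙ has at least |var(f(-∞)) - var(f(∞))| distinct real roots, where var(f(±∞)) denotes the number of sign changes in the sequence of signs of (f₀(x), ..., fₙ(x)) for x sufficiently large positive (resp. negative). -/
open Polynomial Finset

/-- Variation: number of consecutive sign changes of `(f 0 x, ..., f n x)`. -/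
noncomputable def varAt (n : ℕ) (f : ℕ → Polynomial ℝ) (x : ℝ) : ℕ :=
  ((Finset.range n).filter (fun k => (f k).eval x * (f (k+1)).eval x < 0)).card

/-- A polynomial with no root on `[a,b]` has the same sign at `a` and `b`. -/
lemma noRoot_sign {g : Polynomial ℝ} {a b : ℝ} (hab : a ≤ b)
    (h : ∀ x, a ≤ x → x ≤ b → g.eval x ≠ 0) : 0 < g.eval a * g.eval b := by
  have ha := h a le_rfl hab
  have hb := h b hab le_rfl
  have hcont : ContinuousOn (fun x => g.eval x) (Set.Icc a b) :=
    (Polynomial.continuous g).continuousOn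
  rcases lt_or_gt_of_ne ha with ha' | ha' <;> rcases lt_or_gt_of_ne hb with hb' | hb'
  · nlinarith
  · exfalso
    obtain ⟨x, hx, hx0⟩ := intermediate_value_Icc hab hcont
      (Set.mem_Icc.mpr ⟨le_of_lt ha', le_of_lt hb'⟩)
    exact h x hx.1 hx.2 hx0
  · exfalso
    obtain ⟨x, hx, hx0⟩ := intermediate_value_Icc' hab hcont
      (Set.mem_Icc.mpr ⟨le_of_lt hb', le_of_lt ha'⟩)
    exact h x hx.1 hx.2 hx0
  · nlinarith

lemma varAt_eq_sum (n : ℕ) (f : ℕ → Polynomial ℝ) (x : ℝ) :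
    (varAt n f x : ℤ) =
      ∑ k ∈ Finset.range n, (if (f k).eval x * (f (k+1)).eval x < 0 then (1:ℤ) else 0) := by
  rw [varAt, Finset.card_filter]
  push_cast
  rfl

lemma varAt_congr (n : ℕ) (f : ℕ → Polynomial ℝ) {a b : ℝ} (hab : a ≤ b)
    (h : ∀ k ≤ n, ∀ x, a ≤ x → x ≤ b → (f k).eval x ≠ 0) :
    varAt n f a = varAt n f b := by
  unfold varAt
  congr 1
  apply Finset.filter_congr
  intro k hk
  have hkn := Finset.mem_range.mp hk
  have h1 : 0 < (f k).eval a * (f k).eval b := noRoot_sign hab (h k hkn.le)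
  have h2 : 0 < (f (k+1)).eval a * (f (k+1)).eval b := noRoot_sign hab (h (k+1) hkn)
  constructor <;> intro hlt <;> nlinarith [mul_pos h1 h2]

lemma abs_ite_sub_ite (p q : Prop) [Decidable p] [Decidable q] :
    |(if p then (1:ℤ) else 0) - (if q then (1:ℤ) else 0)| ≤ 1 := by
  split_ifs <;> norm_num

lemma pair_one {A M B : ℝ} (hAB : A * B < 0) (hM : M ≠ 0) :
    ((if A * M < 0 then (1:ℤ) else 0) + (if M * B < 0 then (1:ℤ) else 0)) = 1 := by
  have hM2 : 0 < M * M := mul_self_pos.mpr hM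
  have hprod : (A * M) * (M * B) < 0 := by nlinarith
  by_cases hc : A * M < 0
  · have : 0 < M * B := by nlinarith
    rw [if_pos hc, if_neg (not_lt.mpr this.le)]; norm_num
  · have : M * B < 0 := by
      rcases lt_or_ge (M*B) 0 with h | h
      · exact h
      · exfalso; nlinarith [not_lt.mp hc]
    rw [if_neg hc, if_pos this]; norm_num

/-- Crossing a single point `x₀`: the variation changes by at most 1 if `f n` vanishes
at `x₀`, and not at all otherwise. -/
lemma cross (n : ℕ) (f : ℕ → Polynomial ℝ)
    (h0 : ∃ c : ℝ, c ≠ 0 ∧ f 0 = Polynomial.C c)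
    (h2 : ∀ k : ℕ, 0 < k → k < n → ∀ x₀ : ℝ, (f k).eval x₀ = 0 →
      (f (k-1)).eval x₀ * (f (k+1)).eval x₀ < 0)
    {a c x₀ : ℝ} (hax : a < x₀) (hxc : x₀ < c)
    (hno : ∀ k ≤ n, ∀ x, a ≤ x → x ≤ c → x ≠ x₀ → (f k).eval x ≠ 0) :
    |(varAt n f a : ℤ) - (varAt n f c : ℤ)| ≤ if (f n).eval x₀ = 0 then 1 else 0 := by
  classical
  obtain ⟨c₀, hc₀, hf0⟩ := h0
  have hZ0 : (f 0).eval x₀ ≠ 0 := by rw [hf0]; simpa using hc₀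
  -- sign constancy helpers
  have hsac : ∀ k ≤ n, (f k).eval x₀ ≠ 0 → 0 < (f k).eval a * (f k).eval c := by
    intro k hk hz
    refine noRoot_sign (le_of_lt (hax.trans hxc)) (fun x h1 h2' => ?_)
    by_cases hx : x = x₀
    · subst hx; exact hz
    · exact hno k hk x h1 h2' hx
  have hsa : ∀ k ≤ n, (f k).eval x₀ ≠ 0 → 0 < (f k).eval a * (f k).eval x₀ := by
    intro k hk hz
    refine noRoot_sign hax.le (fun x h1 h2' => ?_)
    by_cases hx : x = x₀
    · subst hx; exact hz
    · exact hno k hk x h1 (h2'.trans hxc.le) hx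
  have hsc : ∀ k ≤ n, (f k).eval x₀ ≠ 0 → 0 < (f k).eval x₀ * (f k).eval c := by
    intro k hk hz
    refine noRoot_sign hxc.le (fun x h1 h2' => ?_)
    by_cases hx : x = x₀
    · subst hx; exact hz
    · exact hno k hk x (hax.le.trans h1) h2' hx
  set d : ℕ → ℤ := fun k =>
    (if (f k).eval a * (f (k+1)).eval a < 0 then (1:ℤ) else 0)
      - (if (f k).eval c * (f (k+1)).eval c < 0 then (1:ℤ) else 0) with hd
  have hdzero : ∀ k < n, (f k).eval x₀ ≠ 0 → (f (k+1)).eval x₀ ≠ 0 → d k = 0 := by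
    intro k hkn hz1 hz2
    have h1 := hsac k hkn.le hz1
    have h2' := hsac (k+1) hkn hz2
    have : ((f k).eval a * (f (k+1)).eval a < 0) ↔ ((f k).eval c * (f (k+1)).eval c < 0) := by
      constructor <;> intro hlt <;> nlinarith [mul_pos h1 h2']
    simp only [hd]
    by_cases hca : (f k).eval a * (f (k+1)).eval a < 0
    · rw [if_pos hca, if_pos (this.mp hca)]; ring
    · rw [if_neg hca, if_neg (fun hc' => hca (this.mpr hc'))]; ring
  rw [varAt_eq_sum, varAt_eq_sum, ← Finset.sum_sub_distrib]
  show |∑ k ∈ Finset.range n, d k| ≤ _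
  -- split the index set
  set p₁ : ℕ → Prop := fun k => 0 < k ∧ (f k).eval x₀ = 0 with hp₁
  set p₂ : ℕ → Prop := fun k => k + 1 < n ∧ (f (k+1)).eval x₀ = 0 with hp₂
  set B := (Finset.range n).filter p₁ with hB
  set R := (Finset.range n).filter (fun k => ¬ p₁ k) with hR
  set B' := R.filter p₂ with hB'
  set C := R.filter (fun k => ¬ p₂ k) with hC
  have hsplit : ∑ k ∈ Finset.range n, d k = (∑ k ∈ B, d k + ∑ k ∈ B', d k) + ∑ k ∈ C, d k := by
    rw [add_assoc, Finset.sum_filter_add_sum_filter_not R p₂ d,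
      Finset.sum_filter_add_sum_filter_not (Finset.range n) p₁ d]
  -- facts about members of B
  have hBmem : ∀ j ∈ B, 0 < j ∧ j < n ∧ (f j).eval x₀ = 0 := by
    intro j hj
    rw [hB, Finset.mem_filter, Finset.mem_range] at hj
    exact ⟨hj.2.1, hj.1, hj.2.2⟩
  -- B' maps to B by succ
  have hBB' : ∑ k ∈ B', d k = ∑ j ∈ B, d (j - 1) := by
    refine Finset.sum_nbij' (fun k => k + 1) (fun j => j - 1) ?_ ?_ ?_ ?_ ?_
    · intro k hk
      rw [hB', Finset.mem_filter, hR, Finset.mem_filter] at hk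
      rw [hB, Finset.mem_filter, Finset.mem_range]
      exact ⟨hk.2.1, Nat.succ_pos k, hk.2.2⟩
    · intro j hj
      obtain ⟨hj0, hjn, hjz⟩ := hBmem j hj
      have hprod := h2 j hj0 hjn x₀ hjz
      have hz1 : (f (j-1)).eval x₀ ≠ 0 := by
        intro h; rw [h, zero_mul] at hprod; exact lt_irrefl 0 hprod
      rw [hB', Finset.mem_filter, hR, Finset.mem_filter, Finset.mem_range]
      have hj1 : j - 1 + 1 = j := Nat.succ_pred_eq_of_pos hj0
      refine ⟨⟨lt_of_le_of_lt (Nat.pred_le j) hjn, ?_⟩, ?_⟩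
      · rintro ⟨-, hz⟩; exact hz1 hz
      · rw [hp₂]; exact ⟨by rw [hj1]; exact hjn, by rw [hj1]; exact hjz⟩
    · intro k _; simp
    · intro j hj; exact Nat.succ_pred_eq_of_pos (hBmem j hj).1
    · intro k _; simp
  have hBsum : ∑ k ∈ B, d k + ∑ k ∈ B', d k = 0 := by
    rw [hBB', ← Finset.sum_add_distrib]
    refine Finset.sum_eq_zero (fun j hj => ?_)
    obtain ⟨hj0, hjn, hjz⟩ := hBmem j hj
    obtain ⟨i, rfl⟩ : ∃ i, j = i + 1 := ⟨j - 1, (Nat.succ_pred_eq_of_pos hj0).symm⟩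
    have hprod := h2 (i+1) hj0 hjn x₀ hjz
    simp only [Nat.add_sub_cancel] at hprod ⊢
    have hzA : (f i).eval x₀ ≠ 0 := by
      intro h; rw [h, zero_mul] at hprod; exact lt_irrefl 0 hprod
    have hzB : (f (i+1+1)).eval x₀ ≠ 0 := by
      intro h; rw [h, mul_zero] at hprod; exact lt_irrefl 0 hprod
    have hin : i ≤ n := le_of_lt (lt_of_le_of_lt (Nat.le_succ i) hjn)
    have hi2n : i + 1 + 1 ≤ n := hjn
    have hAa := hsa i hin hzA
    have hAc := hsc i hin hzA
    have hBa := hsa (i+1+1) hi2n hzB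
    have hBc := hsc (i+1+1) hi2n hzB
    have hMa : (f (i+1)).eval a ≠ 0 :=
      hno (i+1) hjn.le a le_rfl (le_of_lt (hax.trans hxc)) (ne_of_lt hax)
    have hMc : (f (i+1)).eval c ≠ 0 :=
      hno (i+1) hjn.le c (le_of_lt (hax.trans hxc)) le_rfl (ne_of_gt hxc)
    have hABa : (f i).eval a * (f (i+1+1)).eval a < 0 := by
      nlinarith [mul_pos hAa hBa]
    have hABc : (f i).eval c * (f (i+1+1)).eval c < 0 := by
      nlinarith [mul_pos hAc hBc]
    have e1 := pair_one hABa hMa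
    have e2 := pair_one hABc hMc
    simp only [hd]
    omega
  rw [hsplit, hBsum, zero_add]
  by_cases hzn : (f n).eval x₀ = 0
  · rw [if_pos hzn]
    have : ∑ k ∈ C, d k = ∑ k ∈ C, (if k = n - 1 then d k else 0) := by
      refine Finset.sum_congr rfl (fun k hk => ?_)
      rw [hC, Finset.mem_filter, hR, Finset.mem_filter, Finset.mem_range] at hk
      obtain ⟨⟨hkn, hnp₁⟩, hnp₂⟩ := hk
      by_cases hkeq : k = n - 1
      · rw [if_pos hkeq]
      · rw [if_neg hkeq]
        have hk1n : k + 1 < n := by omega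
        have hzk : (f k).eval x₀ ≠ 0 := by
          rcases Nat.eq_zero_or_pos k with h | h
          · subst h; exact hZ0
          · intro hz; exact hnp₁ ⟨h, hz⟩
        have hzk1 : (f (k+1)).eval x₀ ≠ 0 := fun hz => hnp₂ ⟨hk1n, hz⟩
        exact hdzero k hkn hzk hzk1
    rw [this, Finset.sum_ite_eq' C (n-1) d]
    by_cases hmem : n - 1 ∈ C
    · rw [if_pos hmem]; exact abs_ite_sub_ite _ _
    · rw [if_neg hmem]; simp
  · rw [if_neg hzn]
    have : ∑ k ∈ C, d k = 0 := by
      refine Finset.sum_eq_zero (fun k hk => ?_)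
      rw [hC, Finset.mem_filter, hR, Finset.mem_filter, Finset.mem_range] at hk
      obtain ⟨⟨hkn, hnp₁⟩, hnp₂⟩ := hk
      have hzk : (f k).eval x₀ ≠ 0 := by
        rcases Nat.eq_zero_or_pos k with h | h
        · subst h; exact hZ0
        · intro hz; exact hnp₁ ⟨h, hz⟩
      have hzk1 : (f (k+1)).eval x₀ ≠ 0 := by
        rcases eq_or_lt_of_le (Nat.succ_le_of_lt hkn) with h | h
        · rw [show k + 1 = n from h]; exact hzn
        · intro hz; exact hnp₂ ⟨h, hz⟩
      exact hdzero k hkn hzk hzk1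
    rw [this]; simp

/-- The chaining lemma. -/
lemma chain (n : ℕ) (f : ℕ → Polynomial ℝ)
    (h0 : ∃ c : ℝ, c ≠ 0 ∧ f 0 = Polynomial.C c)
    (h2 : ∀ k : ℕ, 0 < k → k < n → ∀ x₀ : ℝ, (f k).eval x₀ = 0 →
      (f (k-1)).eval x₀ * (f (k+1)).eval x₀ < 0) :
    ∀ (m : ℕ) (a b : ℝ), a ≤ b →
    (∀ k ≤ n, (f k).eval a ≠ 0) → (∀ k ≤ n, (f k).eval b ≠ 0) →
    (((Finset.range (n+1)).biUnion (fun k => (f k).roots.toFinset)).filter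
      (fun x => a < x ∧ x < b)).card ≤ m →
    |(varAt n f a : ℤ) - (varAt n f b : ℤ)| ≤
      (((f n).roots.toFinset).filter (fun x => a < x ∧ x < b)).card := by
  classical
  intro m
  induction m with
  | zero =>
    intro a b hab hha hhb hcard
    have hS : (((Finset.range (n+1)).biUnion (fun k => (f k).roots.toFinset)).filter
        (fun x => a < x ∧ x < b)) = ∅ := Finset.card_eq_zero.mp (Nat.le_zero.mp hcard)
    have heq : varAt n f a = varAt n f b := by
      refine varAt_congr n f hab (fun k hk x h1 h2' hz => ?_)
      rcases eq_or_lt_of_le h1 with h | h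
      · exact hha k hk (h ▸ hz)
      rcases eq_or_lt_of_le h2' with h' | h'
      · exact hhb k hk (h' ▸ hz)
      have hfk : f k ≠ 0 := fun h0' => hha k hk (by rw [h0']; simp)
      have : x ∈ (((Finset.range (n+1)).biUnion (fun k => (f k).roots.toFinset)).filter
          (fun x => a < x ∧ x < b)) := by
        rw [Finset.mem_filter, Finset.mem_biUnion]
        exact ⟨⟨k, Finset.mem_range.mpr (Nat.lt_succ_of_le hk),
          Multiset.mem_toFinset.mpr (Polynomial.mem_roots'.mpr ⟨hfk, hz⟩)⟩, h, h'⟩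
      rw [hS] at this
      exact absurd this (Finset.notMem_empty x)
    rw [heq]
    simp
  | succ m ih =>
    intro a b hab hha hhb hcard
    set S := (((Finset.range (n+1)).biUnion (fun k => (f k).roots.toFinset)).filter
      (fun x => a < x ∧ x < b)) with hSdef
    by_cases hS : S.Nonempty
    case neg =>
      have hS0 : S = ∅ := Finset.not_nonempty_iff_eq_empty.mp hS
      have heq : varAt n f a = varAt n f b := by
        refine varAt_congr n f hab (fun k hk x h1 h2' hz => ?_)
        rcases eq_or_lt_of_le h1 with h | h
        · exact hha k hk (h ▸ hz)
        rcases eq_or_lt_of_le h2' with h' | h'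
        · exact hhb k hk (h' ▸ hz)
        have hfk : f k ≠ 0 := fun h0' => hha k hk (by rw [h0']; simp)
        have : x ∈ S := by
          rw [hSdef, Finset.mem_filter, Finset.mem_biUnion]
          exact ⟨⟨k, Finset.mem_range.mpr (Nat.lt_succ_of_le hk),
            Multiset.mem_toFinset.mpr (Polynomial.mem_roots'.mpr ⟨hfk, hz⟩)⟩, h, h'⟩
        rw [hS0] at this
        exact absurd this (Finset.notMem_empty x)
      rw [heq]
      simp
    case pos =>
      set x₀ := S.min' hS with hx₀def
      have hx₀S : x₀ ∈ S := S.min'_mem hS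
      have hx₀ab : a < x₀ ∧ x₀ < b := (Finset.mem_filter.mp hx₀S).2
      -- choose u: next critical point or b
      set u : ℝ := if h : (S.erase x₀).Nonempty then (S.erase x₀).min' h else b with hudef
      have hx₀u : x₀ < u := by
        rw [hudef]
        split
        case isTrue h =>
          have hm := (S.erase x₀).min'_mem h
          have := Finset.mem_erase.mp hm
          exact lt_of_le_of_ne (S.min'_le _ this.2) (Ne.symm this.1)
        case isFalse h => exact hx₀ab.2
      have hub : u ≤ b := by
        rw [hudef]
        split
        case isTrue h =>
          have hm := (S.erase x₀).min'_mem h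
          have := Finset.mem_erase.mp hm
          exact le_of_lt (Finset.mem_filter.mp this.2).2.2
        case isFalse h => exact le_rfl
      have hSgap : ∀ y ∈ S, y ≠ x₀ → u ≤ y := by
        intro y hy hyne
        have hy' : y ∈ S.erase x₀ := Finset.mem_erase.mpr ⟨hyne, hy⟩
        rw [hudef, dif_pos ⟨y, hy'⟩]
        exact Finset.min'_le _ y hy'
      set cm : ℝ := (x₀ + u) / 2 with hcm
      have hx₀cm : x₀ < cm := by rw [hcm]; linarith
      have hcmu : cm < u := by rw [hcm]; linarith
      have hacm : a < cm := lt_trans hx₀ab.1 hx₀cm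
      have hcmb : cm ≤ b := le_of_lt (lt_of_lt_of_le hcmu hub)
      -- no roots in [a, cm] except x₀
      have hno : ∀ k ≤ n, ∀ x, a ≤ x → x ≤ cm → x ≠ x₀ → (f k).eval x ≠ 0 := by
        intro k hk x h1 h2' hxne hz
        rcases eq_or_lt_of_le h1 with h | h
        · exact hha k hk (h ▸ hz)
        have hxb : x < b := lt_of_le_of_lt h2' (lt_of_lt_of_le hcmu hub)
        have hfk : f k ≠ 0 := fun h0' => hha k hk (by rw [h0']; simp)
        have hxS : x ∈ S := by
          rw [hSdef, Finset.mem_filter, Finset.mem_biUnion]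
          exact ⟨⟨k, Finset.mem_range.mpr (Nat.lt_succ_of_le hk),
            Multiset.mem_toFinset.mpr (Polynomial.mem_roots'.mpr ⟨hfk, hz⟩)⟩, h, hxb⟩
        have := hSgap x hxS hxne
        linarith
      have hcmne : ∀ k ≤ n, (f k).eval cm ≠ 0 :=
        fun k hk => hno k hk cm hacm.le le_rfl (ne_of_gt hx₀cm)
      -- cross over x₀
      have hcross := cross n f h0 h2 hx₀ab.1 hx₀cm hno
      -- recurse on [cm, b]
      have hsub : (((Finset.range (n+1)).biUnion (fun k => (f k).roots.toFinset)).filter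
          (fun x => cm < x ∧ x < b)) ⊆ S.erase x₀ := by
        intro y hy
        rw [Finset.mem_filter] at hy
        refine Finset.mem_erase.mpr ⟨?_, ?_⟩
        · exact fun h => absurd (h ▸ hy.2.1) (not_lt.mpr (le_of_lt hx₀cm))
        · rw [hSdef, Finset.mem_filter]
          exact ⟨hy.1, lt_trans hacm hy.2.1, hy.2.2⟩
      have hcard' : (((Finset.range (n+1)).biUnion (fun k => (f k).roots.toFinset)).filter
          (fun x => cm < x ∧ x < b)).card ≤ m := by
        calc _ ≤ (S.erase x₀).card := Finset.card_le_card hsub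
        _ = S.card - 1 := Finset.card_erase_of_mem hx₀S
        _ ≤ m := by omega
      have hrec := ih cm b hcmb hcmne hhb hcard'
      -- combine
      have htri : |(varAt n f a : ℤ) - (varAt n f b : ℤ)| ≤
          |(varAt n f a : ℤ) - (varAt n f cm : ℤ)| + |(varAt n f cm : ℤ) - (varAt n f b : ℤ)| :=
        abs_sub_le _ _ _
      refine le_trans htri (le_trans (add_le_add hcross hrec) ?_)
      -- key inclusion inequality
      have hsub2 : ((f n).roots.toFinset).filter (fun x => cm < x ∧ x < b) ⊆
          ((f n).roots.toFinset).filter (fun x => a < x ∧ x < b) := by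
        intro y hy
        rw [Finset.mem_filter] at hy ⊢
        exact ⟨hy.1, lt_trans hacm hy.2.1, hy.2.2⟩
      by_cases hzn : (f n).eval x₀ = 0
      · rw [if_pos hzn]
        have hfn : f n ≠ 0 := fun h0' => hhb n le_rfl (by rw [h0']; simp)
        have hx₀mem : x₀ ∈ ((f n).roots.toFinset).filter (fun x => a < x ∧ x < b) := by
          rw [Finset.mem_filter]
          exact ⟨Multiset.mem_toFinset.mpr (Polynomial.mem_roots'.mpr ⟨hfn, hzn⟩),
            hx₀ab.1, hx₀ab.2⟩
        have hx₀nmem : x₀ ∉ ((f n).roots.toFinset).filter (fun x => cm < x ∧ x < b) := by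
          rw [Finset.mem_filter]
          rintro ⟨-, h, -⟩
          exact absurd h (not_lt.mpr hx₀cm.le)
        have hins : insert x₀ (((f n).roots.toFinset).filter (fun x => cm < x ∧ x < b)) ⊆
            ((f n).roots.toFinset).filter (fun x => a < x ∧ x < b) := by
          intro y hy
          rcases Finset.mem_insert.mp hy with h | h
          · exact h ▸ hx₀mem
          · exact hsub2 h
        have := Finset.card_le_card hins
        rw [Finset.card_insert_of_notMem hx₀nmem] at this
        omega
      · rw [if_neg hzn, zero_add]
        exact_mod_cast Nat.cast_le.mpr (Finset.card_le_card hsub2)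

theorem stmt_0 (n : ℕ) (f : ℕ → Polynomial ℝ)
    (h0 : ∃ c : ℝ, c ≠ 0 ∧ f 0 = Polynomial.C c)
    (h2 : ∀ k : ℕ, 0 < k → k < n → ∀ x₀ : ℝ, (f k).eval x₀ = 0 →
      (f (k-1)).eval x₀ * (f (k+1)).eval x₀ < 0)
    (xm xp : ℝ)
    (hroots : ∀ k ≤ n, ∀ x : ℝ, (f k).eval x = 0 → xm < x ∧ x < xp) :
    |(varAt n f xm : ℤ) - (varAt n f xp : ℤ)| ≤ ((f n).roots.toFinset.card : ℤ) := by
  classical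
  have hhm : ∀ k ≤ n, (f k).eval xm ≠ 0 := by
    intro k hk h
    have := (hroots k hk xm h).1
    exact lt_irrefl _ this
  have hhp : ∀ k ≤ n, (f k).eval xp ≠ 0 := by
    intro k hk h
    have := (hroots k hk xp h).2
    exact lt_irrefl _ this
  rcases le_or_gt xm xp with hab | hba
  · have := chain n f h0 h2
      ((((Finset.range (n+1)).biUnion (fun k => (f k).roots.toFinset)).filter
        (fun x => xm < x ∧ x < xp)).card) xm xp hab hhm hhp le_rfl
    refine le_trans this ?_
    exact_mod_cast Nat.cast_le.mpr (Finset.card_filter_le _ _)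
  · have heq : varAt n f xp = varAt n f xm := by
      refine varAt_congr n f hba.le (fun k hk x _ _ hz => ?_)
      have := hroots k hk x hz
      linarith
    rw [heq]
    simp
end

section
/- Let aₖ, bₖ be as in the recurrence a₀ = 1, b₀ = 0, aₖ = (1 + δₖx)a_{k-1} + (ηₖx)b_{k-1}, bₖ = εₖa_{k-1} + b_{k-1} with εᵢ, ηᵢ ∈ {±1}, δᵢ = εᵢηᵢ, and assume that for all real x, aₖ(x) and bₖ(x) are not both zero (for each k). If 0 < k < n and aₖ(x₀) = 0 for some real x₀, then a_{k-1}(x₀) ≠ 0, a_{k+1}(x₀) ≠ 0, and sign(a_{k-1}(x₀))·sign(a_{k+1}(x₀)) = -ηₖ·η_{k+1}. -/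
open Polynomial

theorem stmt_8 (n : ℕ) (ε η : ℕ → ℝ)
    (hε : ∀ i, ε i = 1 ∨ ε i = -1) (hη : ∀ i, η i = 1 ∨ η i = -1)
    (a b : ℕ → Polynomial ℝ)
    (ha0 : a 0 = 1) (hb0 : b 0 = 0)
    (ha : ∀ k, 1 ≤ k → k ≤ n →
      a k = (1 + Polynomial.C (ε k * η k) * Polynomial.X) * a (k-1)
            + Polynomial.C (η k) * Polynomial.X * b (k-1))
    (hb : ∀ k, 1 ≤ k → k ≤ n →
      b k = Polynomial.C (ε k) * a (k-1) + b (k-1))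
    (hnv : ∀ k ≤ n, ∀ x : ℝ, ¬((a k).eval x = 0 ∧ (b k).eval x = 0))
    (k : ℕ) (hk1 : 0 < k) (hk2 : k < n) (x₀ : ℝ) (hroot : (a k).eval x₀ = 0) :
    (a (k-1)).eval x₀ ≠ 0 ∧ (a (k+1)).eval x₀ ≠ 0 ∧
    Real.sign ((a (k-1)).eval x₀) * Real.sign ((a (k+1)).eval x₀) = -(η k * η (k+1)) := by
  have hx0 : ∀ j ≤ n, (a j).eval 0 = 1 := by
    intro j
    induction j with
    | zero => intro _; simp [ha0]
    | succ j ih =>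
      intro hj
      rw [ha (j+1) (by omega) hj]
      simp [ih (by omega)]
  have hx₀ne : x₀ ≠ 0 := by
    rintro rfl
    rw [hx0 k (by omega)] at hroot
    norm_num at hroot
  obtain ⟨m, rfl⟩ : ∃ m, k = m + 1 := ⟨k - 1, by omega⟩
  simp only [Nat.add_sub_cancel] at *
  set A := (a m).eval x₀ with hA
  set B := (b m).eval x₀ with hB
  have e1 : (1 + ε (m+1) * η (m+1) * x₀) * A + η (m+1) * x₀ * B = 0 := by
    have h := hroot
    rw [ha (m+1) (by omega) (by omega)] at h
    simpa using h
  have e2 : (b (m+1)).eval x₀ = ε (m+1) * A + B := by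
    rw [hb (m+1) (by omega) (by omega)]; simp [hA, hB]
  have e3 : (a (m+2)).eval x₀ = η (m+2) * x₀ * ((b (m+1)).eval x₀) := by
    rw [ha (m+2) (by omega) (by omega)]
    simp [show m + 2 - 1 = m + 1 from rfl, hroot]
  have hη1ne : η (m+1) ≠ 0 := by rcases hη (m+1) with h|h <;> rw [h] <;> norm_num
  have hη2ne : η (m+2) ≠ 0 := by rcases hη (m+2) with h|h <;> rw [h] <;> norm_num
  have hsq1 : η (m+1) * η (m+1) = 1 := by rcases hη (m+1) with h|h <;> rw [h] <;> norm_num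
  have hAne : A ≠ 0 := by
    intro hA0
    have hB0 : B = 0 := by
      have : η (m+1) * x₀ * B = 0 := by rw [hA0] at e1; linear_combination e1
      rcases mul_eq_zero.mp this with h|h
      · exact absurd h (mul_ne_zero hη1ne hx₀ne)
      · exact h
    exact hnv m (by omega) x₀ ⟨hA0, hB0⟩
  have key : (a (m+2)).eval x₀ = -(η (m+1) * η (m+2)) * A := by
    have hne : η (m+1) * x₀ ≠ 0 := mul_ne_zero hη1ne hx₀ne
    apply mul_left_cancel₀ hne
    rw [e3, e2]
    linear_combination (η (m+2) * x₀) * e1 + (η (m+2) * x₀ * A) * hsq1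
  have ha2ne : (a (m+2)).eval x₀ ≠ 0 := by
    rw [key]
    exact mul_ne_zero (neg_ne_zero.mpr (mul_ne_zero hη1ne hη2ne)) hAne
  refine ⟨hAne, ha2ne, ?_⟩
  have hs : Real.sign A * Real.sign A = 1 := by
    rcases hAne.lt_or_gt with h|h
    · simp [Real.sign_of_neg h]
    · simp [Real.sign_of_pos h]
  rcases hη (m+1) with h1|h1 <;> rcases hη (m+2) with h2|h2 <;>
    rw [key, h1, h2] <;> norm_num <;>
    simp [Real.sign_neg] at * <;> linarith [hs]
end

section
/- Let ε₁,...,εₙ, η₁,...,ηₙ ∈ {±1} with εᵢ = η_{n+1-i} for all 1 ≤ i ≤ n, δᵢ = εᵢηᵢ, and let aₖ, bₖ be defined by a₀ = 1, b₀ = 0, aₖ = (1 + δₖx)a_{k-1} + (ηₖx)b_{k-1}, bₖ = εₖa_{k-1} + b_{k-1}. Assume that for each k and each real x, aₖ(x) and bₖ(x) are not both zero. Then the polynomial aₙ has at least |∑_{k=1}^{n} εₖ| distinct real roots. -/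
open Polynomial Finset

section RileyAux
open Filter

noncomputable def SG (x : ℝ) : ℝ := (SignType.sign x : ℝ)

lemma SG_mul (x y : ℝ) : SG (x * y) = SG x * SG y := by
  simp [SG, sign_mul]

lemma SG_pos {x : ℝ} (h : 0 < x) : SG x = 1 := by simp [SG, sign_pos h]
lemma SG_neg {x : ℝ} (h : x < 0) : SG x = -1 := by simp [SG, sign_neg h]
lemma SG_pm {x : ℝ} (h : x ≠ 0) : SG x = 1 ∨ SG x = -1 := by
  rcases h.lt_or_gt with h | h
  · exact Or.inr (SG_neg h)
  · exact Or.inl (SG_pos h)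
lemma SG_one : SG 1 = 1 := SG_pos one_pos
lemma SG_negone : SG (-1) = -1 := SG_neg (by norm_num)
lemma SG_ne_zero {x : ℝ} (h : x ≠ 0) : SG x ≠ 0 := by
  rcases SG_pm h with h' | h' <;> rw [h'] <;> norm_num
lemma abs_SG_le (x : ℝ) : |SG x| ≤ 1 := by
  rcases eq_or_ne x 0 with rfl | h
  · simp [SG]
  · rcases SG_pm h with h' | h' <;> rw [h'] <;> norm_num

/-- sign is constant on an interval without roots -/
lemma sign_const_of_no_root (p : Polynomial ℝ) {u v : ℝ} (huv : u ≤ v)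
    (h : ∀ x, u ≤ x → x ≤ v → p.eval x ≠ 0) :
    SG (p.eval u) = SG (p.eval v) := by
  have hu : p.eval u ≠ 0 := h u le_rfl huv
  have hv : p.eval v ≠ 0 := h v huv le_rfl
  have hcont : ContinuousOn (fun x => p.eval x) (Set.Icc u v) :=
    (Polynomial.continuous p).continuousOn
  rcases hu.lt_or_gt with hu' | hu' <;> rcases hv.lt_or_gt with hv' | hv'
  · rw [SG_neg hu', SG_neg hv']
  · exfalso
    obtain ⟨x, hx, hx0⟩ := intermediate_value_Icc huv hcont ⟨le_of_lt hu', le_of_lt hv'⟩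
    exact h x hx.1 hx.2 hx0
  · exfalso
    obtain ⟨x, hx, hx0⟩ := intermediate_value_Icc' huv hcont ⟨le_of_lt hv', le_of_lt hu'⟩
    exact h x hx.1 hx.2 hx0
  · rw [SG_pos hu', SG_pos hv']

/-- there is a root-free interval just right of r -/
lemma exists_right_gap {p : Polynomial ℝ} (hp : p ≠ 0) (r : ℝ) :
    ∃ c, r < c ∧ ∀ x, r < x → x ≤ c → p.eval x ≠ 0 := by
  set F := p.roots.toFinset.filter (fun z => r < z) with hF
  by_cases hne : F.Nonempty
  · refine ⟨(r + F.min' hne) / 2, ?_, ?_⟩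
    · have : r < F.min' hne := (Finset.mem_filter.mp (F.min'_mem hne)).2
      linarith
    · intro x hx1 hx2 hx0
      have hxF : x ∈ F := by
        simp only [hF, Finset.mem_filter, Multiset.mem_toFinset]
        exact ⟨(Polynomial.mem_roots hp).mpr hx0, hx1⟩
      have h1 : F.min' hne ≤ x := F.min'_le x hxF
      have h2 : r < F.min' hne := (Finset.mem_filter.mp (F.min'_mem hne)).2
      linarith
  · refine ⟨r + 1, by linarith, ?_⟩
    intro x hx1 _ hx0
    exact hne ⟨x, by
      simp only [hF, Finset.mem_filter, Multiset.mem_toFinset]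
      exact ⟨(Polynomial.mem_roots hp).mpr hx0, hx1⟩⟩

lemma exists_left_gap {p : Polynomial ℝ} (hp : p ≠ 0) (r : ℝ) :
    ∃ c, c < r ∧ ∀ x, c ≤ x → x < r → p.eval x ≠ 0 := by
  set F := p.roots.toFinset.filter (fun z => z < r) with hF
  by_cases hne : F.Nonempty
  · refine ⟨(r + F.max' hne) / 2, ?_, ?_⟩
    · have : F.max' hne < r := (Finset.mem_filter.mp (F.max'_mem hne)).2
      linarith
    · intro x hx1 hx2 hx0
      have hxF : x ∈ F := by
        simp only [hF, Finset.mem_filter, Multiset.mem_toFinset]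
        exact ⟨(Polynomial.mem_roots hp).mpr hx0, hx2⟩
      have h1 : x ≤ F.max' hne := F.le_max' x hxF
      have h2 : F.max' hne < r := (Finset.mem_filter.mp (F.max'_mem hne)).2
      linarith
  · refine ⟨r - 1, by linarith, ?_⟩
    intro x _ hx2 hx0
    exact hne ⟨x, by
      simp only [hF, Finset.mem_filter, Multiset.mem_toFinset]
      exact ⟨(Polynomial.mem_roots hp).mpr hx0, hx2⟩⟩

open Classical in
noncomputable def rsg (p : Polynomial ℝ) (r : ℝ) : ℝ :=
  if h : ∃ s : ℝ, ∀ᶠ x in nhdsWithin r (Set.Ioi r), SG (p.eval x) = s then h.choose else 0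

open Classical in
noncomputable def lsg (p : Polynomial ℝ) (r : ℝ) : ℝ :=
  if h : ∃ s : ℝ, ∀ᶠ x in nhdsWithin r (Set.Iio r), SG (p.eval x) = s then h.choose else 0

lemma rsg_eq {p : Polynomial ℝ} {r s : ℝ}
    (hs : ∀ᶠ x in nhdsWithin r (Set.Ioi r), SG (p.eval x) = s) : rsg p r = s := by
  have h : ∃ s : ℝ, ∀ᶠ x in nhdsWithin r (Set.Ioi r), SG (p.eval x) = s := ⟨s, hs⟩
  classical rw [rsg, dif_pos h]
  obtain ⟨x, hx1, hx2⟩ := (h.choose_spec.and hs).exists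
  rw [← hx1, hx2]

lemma lsg_eq {p : Polynomial ℝ} {r s : ℝ}
    (hs : ∀ᶠ x in nhdsWithin r (Set.Iio r), SG (p.eval x) = s) : lsg p r = s := by
  have h : ∃ s : ℝ, ∀ᶠ x in nhdsWithin r (Set.Iio r), SG (p.eval x) = s := ⟨s, hs⟩
  classical rw [lsg, dif_pos h]
  obtain ⟨x, hx1, hx2⟩ := (h.choose_spec.and hs).exists
  rw [← hx1, hx2]

lemma rsg_eq_sign {p : Polynomial ℝ} {r c : ℝ} (hrc : r < c)
    (h : ∀ x, r < x → x ≤ c → p.eval x ≠ 0) : rsg p r = SG (p.eval c) := by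
  apply rsg_eq
  filter_upwards [Ioo_mem_nhdsGT_of_mem (show r ∈ Set.Ico r c from ⟨le_rfl, hrc⟩)] with x hx
  exact sign_const_of_no_root p (le_of_lt hx.2)
    (fun y hy1 hy2 => h y (lt_of_lt_of_le hx.1 hy1) hy2)

lemma lsg_eq_sign {p : Polynomial ℝ} {r c : ℝ} (hrc : c < r)
    (h : ∀ x, c ≤ x → x < r → p.eval x ≠ 0) : lsg p r = SG (p.eval c) := by
  apply lsg_eq
  filter_upwards [Ioo_mem_nhdsLT_of_mem (show r ∈ Set.Ioc c r from ⟨hrc, le_rfl⟩)] with x hx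
  exact (sign_const_of_no_root p (le_of_lt hx.1)
    (fun y hy1 hy2 => h y hy1 (lt_of_le_of_lt hy2 hx.2))).symm

lemma rsg_pm {p : Polynomial ℝ} (hp : p ≠ 0) (r : ℝ) : rsg p r = 1 ∨ rsg p r = -1 := by
  obtain ⟨c, hc1, hc2⟩ := exists_right_gap hp r
  rw [rsg_eq_sign hc1 hc2]
  exact SG_pm (hc2 c hc1 le_rfl)

lemma lsg_pm {p : Polynomial ℝ} (hp : p ≠ 0) (r : ℝ) : lsg p r = 1 ∨ lsg p r = -1 := by
  obtain ⟨c, hc1, hc2⟩ := exists_left_gap hp r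
  rw [lsg_eq_sign hc1 hc2]
  exact SG_pm (hc2 c le_rfl hc1)

lemma tele_aux (q : Polynomial ℝ) (hq : q ≠ 0) (N : ℕ) :
    ∀ A B : ℝ, A ≤ B → q.eval A ≠ 0 → q.eval B ≠ 0 →
    (q.roots.toFinset.filter (fun r => A < r ∧ r < B)).card ≤ N →
    ∑ r ∈ q.roots.toFinset.filter (fun r => A < r ∧ r < B), (rsg q r - lsg q r)
      = SG (q.eval B) - SG (q.eval A) := by
  induction N with
  | zero =>
    intro A B hAB hA hB hcard
    have hempty : q.roots.toFinset.filter (fun r => A < r ∧ r < B) = ∅ :=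
      Finset.card_eq_zero.mp (Nat.le_zero.mp hcard)
    rw [hempty, Finset.sum_empty]
    have : SG (q.eval A) = SG (q.eval B) := by
      apply sign_const_of_no_root q hAB
      intro x hx1 hx2 hx0
      rcases eq_or_lt_of_le hx1 with rfl | hx1'
      · exact hA hx0
      rcases eq_or_lt_of_le hx2 with rfl | hx2'
      · exact hB hx0
      have : x ∈ q.roots.toFinset.filter (fun r => A < r ∧ r < B) := by
        simp only [Finset.mem_filter, Multiset.mem_toFinset]
        exact ⟨(Polynomial.mem_roots hq).mpr hx0, hx1', hx2'⟩
      rw [hempty] at this; exact absurd this (Finset.notMem_empty x)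
    linarith
  | succ N ih =>
    intro A B hAB hA hB hcard
    set F := q.roots.toFinset.filter (fun r => A < r ∧ r < B) with hFdef
    by_cases hne : F.Nonempty
    · set r := F.max' hne with hr
      have hrF : r ∈ F := F.max'_mem hne
      have hrprop := Finset.mem_filter.mp hrF
      have hroot : q.eval r = 0 := by
        have := hrprop.1
        rwa [Multiset.mem_toFinset, Polynomial.mem_roots hq] at this
      have hAr : A < r := hrprop.2.1
      have hrB : r < B := hrprop.2.2
      -- right side: no roots in (r, B]
      have hrsg : rsg q r = SG (q.eval B) := by
        apply rsg_eq_sign hrB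
        intro x hx1 hx2 hx0
        rcases eq_or_lt_of_le hx2 with rfl | hx2'
        · exact hB hx0
        have hxF : x ∈ F := by
          simp only [hFdef, Finset.mem_filter, Multiset.mem_toFinset]
          exact ⟨(Polynomial.mem_roots hq).mpr hx0, lt_trans hAr hx1, hx2'⟩
        exact absurd (F.le_max' x hxF) (not_le.mpr hx1)
      -- left sample point c
      obtain ⟨c₀, hc₀1, hc₀2⟩ := exists_left_gap hq r
      set c := max c₀ A with hc
      have hcr : c < r := max_lt hc₀1 hAr
      have hAc : A ≤ c := le_max_right _ _
      have hcgap : ∀ x, c ≤ x → x < r → q.eval x ≠ 0 :=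
        fun x hx1 hx2 => hc₀2 x (le_trans (le_max_left _ _) hx1) hx2
      have hcval : q.eval c ≠ 0 := hcgap c le_rfl hcr
      have hlsg : lsg q r = SG (q.eval c) := lsg_eq_sign hcr hcgap
      -- erase r
      have hFerase : F.erase r = q.roots.toFinset.filter (fun z => A < z ∧ z < c) := by
        ext z
        simp only [Finset.mem_erase, hFdef, Finset.mem_filter, Multiset.mem_toFinset]
        constructor
        · rintro ⟨hzr, hz1, hz2, hz3⟩
          refine ⟨hz1, hz2, ?_⟩
          have hzle : z ≤ r := F.le_max' z (by
            simp only [hFdef, Finset.mem_filter, Multiset.mem_toFinset]; exact ⟨hz1, hz2, hz3⟩)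
          have hzlt : z < r := lt_of_le_of_ne hzle hzr
          by_contra hcz
          push_neg at hcz
          exact hcgap z hcz hzlt (by rwa [Polynomial.mem_roots hq] at hz1)
        · rintro ⟨hz1, hz2, hz3⟩
          exact ⟨ne_of_lt (lt_trans hz3 hcr), hz1, hz2, lt_trans hz3 (lt_trans hcr hrB)⟩
      have hcard' : (q.roots.toFinset.filter (fun z => A < z ∧ z < c)).card ≤ N := by
        rw [← hFerase]
        have := Finset.card_erase_of_mem hrF
        omega
      have hih := ih A c hAc hA hcval hcard'
      have hsum : ∑ z ∈ F, (rsg q z - lsg q z)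
          = (rsg q r - lsg q r) + ∑ z ∈ F.erase r, (rsg q z - lsg q z) :=
        (Finset.add_sum_erase F _ hrF).symm
      rw [hsum, hFerase, hih, hrsg, hlsg]
      ring
    · -- empty: same as base case
      have hempty : F = ∅ := Finset.not_nonempty_iff_eq_empty.mp hne
      rw [hempty, Finset.sum_empty]
      have : SG (q.eval A) = SG (q.eval B) := by
        apply sign_const_of_no_root q hAB
        intro x hx1 hx2 hx0
        rcases eq_or_lt_of_le hx1 with rfl | hx1'
        · exact hA hx0
        rcases eq_or_lt_of_le hx2 with rfl | hx2'
        · exact hB hx0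
        have : x ∈ F := by
          simp only [hFdef, Finset.mem_filter, Multiset.mem_toFinset]
          exact ⟨(Polynomial.mem_roots hq).mpr hx0, hx1', hx2'⟩
        rw [hempty] at this; exact absurd this (Finset.notMem_empty x)
      linarith

lemma eventually_above (q : Polynomial ℝ) (hq : q ≠ 0) :
    ∀ᶠ b in atTop, q.eval b ≠ 0 ∧ SG (q.eval b) = SG q.leadingCoeff ∧
      (∀ r, q.eval r = 0 → r < b) := by
  have hlead : q.leadingCoeff ≠ 0 := leadingCoeff_ne_zero.mpr hq
  have hroots : ∀ᶠ b in atTop, ∀ r ∈ q.roots.toFinset, r < b := by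
    rw [eventually_all_finset]
    intro r _
    exact eventually_gt_atTop r
  by_cases hdeg : q.natDegree = 0
  · obtain ⟨c, rfl⟩ := Polynomial.natDegree_eq_zero.mp hdeg
    have hc : c ≠ 0 := by simpa using hq
    filter_upwards [hroots] with b hb
    refine ⟨by simpa using hc, by simp, fun r hr => ?_⟩
    exact absurd (by simpa using hr) hc
  · have hdeg' : 0 < q.degree :=
      Polynomial.natDegree_pos_iff_degree_pos.mp (Nat.pos_of_ne_zero hdeg)
    rcases hlead.lt_or_gt with hl | hl
    · have T := Polynomial.tendsto_atBot_of_leadingCoeff_nonpos q hdeg' (le_of_lt hl)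
      filter_upwards [hroots, T.eventually (eventually_lt_atBot (0:ℝ))] with b hb hb2
      refine ⟨ne_of_lt hb2, by rw [SG_neg hb2, SG_neg hl], fun r hr => hb r ?_⟩
      rw [Multiset.mem_toFinset, Polynomial.mem_roots hq]; exact hr
    · have T := Polynomial.tendsto_atTop_of_leadingCoeff_nonneg q hdeg' (le_of_lt hl)
      filter_upwards [hroots, T.eventually (eventually_gt_atTop (0:ℝ))] with b hb hb2
      refine ⟨ne_of_gt hb2, by rw [SG_pos hb2, SG_pos hl], fun r hr => hb r ?_⟩
      rw [Multiset.mem_toFinset, Polynomial.mem_roots hq]; exact hr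

lemma eventually_below (q : Polynomial ℝ) (hq : q ≠ 0) :
    ∀ᶠ a in atBot, q.eval a ≠ 0 ∧
      SG (q.eval a) = (-1 : ℝ) ^ q.natDegree * SG q.leadingCoeff ∧
      (∀ r, q.eval r = 0 → a < r) := by
  set q' := q.comp (-X) with hq'def
  have hcomp : ∀ x : ℝ, q'.eval x = q.eval (-x) := by
    intro x; simp [hq'def, Polynomial.eval_comp]
  have hq' : q' ≠ 0 := by
    intro h
    apply hq
    have : q = q'.comp (-X) := by
      rw [hq'def, Polynomial.comp_assoc]
      simp
    rw [this, h, Polynomial.zero_comp]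
  have hdeg' : q'.natDegree = q.natDegree := by
    rw [hq'def, Polynomial.natDegree_comp]
    simp
  have hlead' : q'.leadingCoeff = q.leadingCoeff * (-1) ^ q.natDegree := by
    by_cases hdeg : q.natDegree = 0
    · obtain ⟨c, rfl⟩ := Polynomial.natDegree_eq_zero.mp hdeg
      simp [hq'def]
    · rw [hq'def, Polynomial.leadingCoeff_comp (by simp)]
      simp
  have H := eventually_above q' hq'
  have hneg : Tendsto (fun a : ℝ => -a) atBot atTop := tendsto_neg_atBot_atTop
  filter_upwards [hneg.eventually H] with a ⟨h1, h2, h3⟩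
  rw [hcomp, neg_neg] at h1
  refine ⟨h1, ?_, fun r hr => ?_⟩
  · rw [hcomp, neg_neg] at h2
    rw [h2, hlead', SG_mul]
    have : SG ((-1:ℝ) ^ q.natDegree) = (-1:ℝ) ^ q.natDegree := by
      rcases Nat.even_or_odd q.natDegree with he | ho
      · rw [he.neg_one_pow, SG_pos one_pos]
      · rw [ho.neg_one_pow, SG_neg (by norm_num : (-1:ℝ) < 0)]
    rw [this]; ring
  · have : q'.eval (-r) = 0 := by rw [hcomp, neg_neg]; exact hr
    have := h3 (-r) this
    linarith

noncomputable def ind2 (f g : Polynomial ℝ) : ℝ :=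
  ∑ r ∈ f.roots.toFinset, (rsg (f * g) r - lsg (f * g) r)

lemma recip (f g : Polynomial ℝ) (hf : f ≠ 0) (hg : g ≠ 0)
    (hco : ∀ r : ℝ, ¬(f.eval r = 0 ∧ g.eval r = 0)) :
    ind2 f g + ind2 g f
      = SG ((f * g).leadingCoeff) * (1 - (-1 : ℝ) ^ ((f * g).natDegree)) := by
  set q := f * g with hqdef
  have hq : q ≠ 0 := mul_ne_zero hf hg
  obtain ⟨A, hA⟩ := (eventually_below q hq).exists
  obtain ⟨B, hB1, hB2⟩ := ((eventually_above q hq).and (eventually_gt_atTop A)).exists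
  obtain ⟨hAne, hAsg, hAroots⟩ := hA
  obtain ⟨hBne, hBsg, hBroots⟩ := hB1
  have hfilter : q.roots.toFinset.filter (fun r => A < r ∧ r < B) = q.roots.toFinset := by
    apply Finset.filter_true_of_mem
    intro r hr
    have hr0 : q.eval r = 0 := by
      rwa [Multiset.mem_toFinset, Polynomial.mem_roots hq] at hr
    exact ⟨hAroots r hr0, hBroots r hr0⟩
  have htele := tele_aux q hq (q.roots.toFinset.filter (fun r => A < r ∧ r < B)).card
    A B (le_of_lt hB2) hAne hBne le_rfl
  rw [hfilter] at htele
  have hsplit : q.roots.toFinset = f.roots.toFinset ∪ g.roots.toFinset := by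
    rw [hqdef, Polynomial.roots_mul (by rw [← hqdef]; exact hq), Multiset.toFinset_add]
  have hdisj : Disjoint f.roots.toFinset g.roots.toFinset := by
    rw [Finset.disjoint_left]
    intro r hrf hrg
    rw [Multiset.mem_toFinset, Polynomial.mem_roots hf] at hrf
    rw [Multiset.mem_toFinset, Polynomial.mem_roots hg] at hrg
    exact hco r ⟨hrf, hrg⟩
  rw [hsplit, Finset.sum_union hdisj] at htele
  have hind : ind2 f g + ind2 g f
      = ∑ r ∈ f.roots.toFinset, (rsg q r - lsg q r)
        + ∑ r ∈ g.roots.toFinset, (rsg q r - lsg q r) := by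
    rw [ind2, ind2, ← hqdef, mul_comm g f, ← hqdef]
  rw [hind, htele, hAsg, hBsg]
  ring

lemma ind2_add_mul (f g h : Polynomial ℝ) (hf : f ≠ 0) (hg : g ≠ 0)
    (hgh : g + h * f ≠ 0) (hco : ∀ r : ℝ, f.eval r = 0 → g.eval r ≠ 0) :
    ind2 f (g + h * f) = ind2 f g := by
  apply Finset.sum_congr rfl
  intro r hr
  have hroot : f.eval r = 0 := by
    rwa [Multiset.mem_toFinset, Polynomial.mem_roots hf] at hr
  have hgr : g.eval r ≠ 0 := hco r hroot
  have hghr : (g + h * f).eval r = g.eval r := by simp [hroot]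
  set P := f * g * (g + h * f) with hP
  have hPne : P ≠ 0 := mul_ne_zero (mul_ne_zero hf hg) hgh
  -- right signs
  obtain ⟨c, hc1, hc2⟩ := exists_right_gap hPne r
  have hfc : ∀ x, r < x → x ≤ c → f.eval x ≠ 0 := by
    intro x h1 h2 h0; exact hc2 x h1 h2 (by simp [hP, h0])
  have hgc : ∀ x, r < x → x ≤ c → g.eval x ≠ 0 := by
    intro x h1 h2 h0; exact hc2 x h1 h2 (by simp [hP, h0])
  have hghc : ∀ x, r < x → x ≤ c → (g + h * f).eval x ≠ 0 := by
    intro x h1 h2 h0; exact hc2 x h1 h2 (by simp [hP, h0])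
  have hgsign : SG (g.eval c) = SG (g.eval r) :=
    (sign_const_of_no_root g (le_of_lt hc1) (fun x h1 h2 => by
      rcases eq_or_lt_of_le h1 with rfl | h1'
      · exact hgr
      · exact hgc x h1' h2)).symm
  have hghsign : SG ((g + h * f).eval c) = SG (g.eval r) := by
    rw [← hghr]
    exact (sign_const_of_no_root (g + h * f) (le_of_lt hc1) (fun x h1 h2 => by
      rcases eq_or_lt_of_le h1 with rfl | h1'
      · rw [hghr]; exact hgr
      · exact hghc x h1' h2)).symm
  have hr1 : rsg (f * (g + h * f)) r = SG (f.eval c) * SG (g.eval r) := by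
    rw [rsg_eq_sign hc1 (fun x h1 h2 => by
      intro h0
      rw [Polynomial.eval_mul] at h0
      rcases mul_eq_zero.mp h0 with h0 | h0
      · exact hfc x h1 h2 h0
      · exact hghc x h1 h2 h0)]
    rw [Polynomial.eval_mul, SG_mul, hghsign]
  have hr2 : rsg (f * g) r = SG (f.eval c) * SG (g.eval r) := by
    rw [rsg_eq_sign hc1 (fun x h1 h2 => by
      intro h0
      rw [Polynomial.eval_mul] at h0
      rcases mul_eq_zero.mp h0 with h0 | h0
      · exact hfc x h1 h2 h0
      · exact hgc x h1 h2 h0)]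
    rw [Polynomial.eval_mul, SG_mul, hgsign]
  -- left signs
  obtain ⟨d, hd1, hd2⟩ := exists_left_gap hPne r
  have hfd : ∀ x, d ≤ x → x < r → f.eval x ≠ 0 := by
    intro x h1 h2 h0; exact hd2 x h1 h2 (by simp [hP, h0])
  have hgd : ∀ x, d ≤ x → x < r → g.eval x ≠ 0 := by
    intro x h1 h2 h0; exact hd2 x h1 h2 (by simp [hP, h0])
  have hghd : ∀ x, d ≤ x → x < r → (g + h * f).eval x ≠ 0 := by
    intro x h1 h2 h0; exact hd2 x h1 h2 (by simp [hP, h0])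
  have hgsign' : SG (g.eval d) = SG (g.eval r) :=
    sign_const_of_no_root g (le_of_lt hd1) (fun x h1 h2 => by
      rcases eq_or_lt_of_le h2 with rfl | h2'
      · exact hgr
      · exact hgd x h1 h2')
  have hghsign' : SG ((g + h * f).eval d) = SG (g.eval r) := by
    rw [← hghr]
    exact sign_const_of_no_root (g + h * f) (le_of_lt hd1) (fun x h1 h2 => by
      rcases eq_or_lt_of_le h2 with rfl | h2'
      · rw [hghr]; exact hgr
      · exact hghd x h1 h2')
  have hl1 : lsg (f * (g + h * f)) r = SG (f.eval d) * SG (g.eval r) := by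
    rw [lsg_eq_sign hd1 (fun x h1 h2 => by
      intro h0
      rw [Polynomial.eval_mul] at h0
      rcases mul_eq_zero.mp h0 with h0 | h0
      · exact hfd x h1 h2 h0
      · exact hghd x h1 h2 h0)]
    rw [Polynomial.eval_mul, SG_mul, hghsign']
  have hl2 : lsg (f * g) r = SG (f.eval d) * SG (g.eval r) := by
    rw [lsg_eq_sign hd1 (fun x h1 h2 => by
      intro h0
      rw [Polynomial.eval_mul] at h0
      rcases mul_eq_zero.mp h0 with h0 | h0
      · exact hfd x h1 h2 h0
      · exact hgd x h1 h2 h0)]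
    rw [Polynomial.eval_mul, SG_mul, hgsign']
  rw [hr1, hr2, hl1, hl2]

lemma abs_ind2_le (f g : Polynomial ℝ) (hf : f ≠ 0) (hg : g ≠ 0) :
    |ind2 f g| ≤ 2 * (f.roots.toFinset.card : ℝ) := by
  have hq : f * g ≠ 0 := mul_ne_zero hf hg
  calc |ind2 f g| ≤ ∑ r ∈ f.roots.toFinset, |rsg (f * g) r - lsg (f * g) r| :=
        Finset.abs_sum_le_sum_abs _ _
    _ ≤ ∑ _r ∈ f.roots.toFinset, (2 : ℝ) := by
        apply Finset.sum_le_sum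
        intro r _
        rcases rsg_pm hq r with h1 | h1 <;> rcases lsg_pm hq r with h2 | h2 <;>
          rw [h1, h2] <;> norm_num
    _ = 2 * (f.roots.toFinset.card : ℝ) := by
        rw [Finset.sum_const, nsmul_eq_mul]; ring

lemma ind2_def (f g : Polynomial ℝ) (h : f.roots.toFinset = ∅) : ind2 f g = 0 := by
  rw [ind2, h, Finset.sum_empty]


end RileyAux

theorem stmt_12 (n : ℕ) (ε η : ℕ → ℝ)
    (hε : ∀ i, ε i = 1 ∨ ε i = -1) (hη : ∀ i, η i = 1 ∨ η i = -1)
    (hpal : ∀ i, 1 ≤ i → i ≤ n → ε i = η (n + 1 - i))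
    (a b : ℕ → Polynomial ℝ)
    (ha0 : a 0 = 1) (hb0 : b 0 = 0)
    (ha : ∀ k, 1 ≤ k → k ≤ n →
      a k = (1 + Polynomial.C (ε k * η k) * Polynomial.X) * a (k-1)
            + Polynomial.C (η k) * Polynomial.X * b (k-1))
    (hb : ∀ k, 1 ≤ k → k ≤ n →
      b k = Polynomial.C (ε k) * a (k-1) + b (k-1))
    (hnv : ∀ k ≤ n, ∀ x : ℝ, ¬((a k).eval x = 0 ∧ (b k).eval x = 0)) :
    |∑ k ∈ Finset.Icc 1 n, ε k| ≤ ((a n).roots.toFinset.card : ℝ) := by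
  rcases Nat.eq_zero_or_pos n with rfl | hn
  · simp
  -- basic sign facts
  have hε0 : ∀ i, ε i ≠ 0 := fun i => by rcases hε i with h | h <;> rw [h] <;> norm_num
  have hη0 : ∀ i, η i ≠ 0 := fun i => by rcases hη i with h | h <;> rw [h] <;> norm_num
  have hε2 : ∀ i, ε i * ε i = 1 := fun i => by rcases hε i with h | h <;> rw [h] <;> norm_num
  set P : ℕ → ℝ := fun k => ∏ i ∈ Finset.Icc 1 k, (ε i * η i) with hPdef
  have hPsucc : ∀ k, P (k + 1) = P k * (ε (k+1) * η (k+1)) := by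
    intro k
    simp only [hPdef]
    rw [Finset.prod_Icc_succ_top (by omega)]
  have hPpm : ∀ k, P k = 1 ∨ P k = -1 := by
    intro k
    induction k with
    | zero => left; simp [hPdef]
    | succ m ih =>
      rw [hPsucc m]
      rcases ih with h | h <;> rcases hε (m+1) with h1 | h1 <;> rcases hη (m+1) with h2 | h2 <;>
        rw [h, h1, h2] <;> norm_num
  have hP0 : ∀ k, P k ≠ 0 := fun k => by rcases hPpm k with h | h <;> rw [h] <;> norm_num
  have hP2 : ∀ k, P k * P k = 1 := fun k => by rcases hPpm k with h | h <;> rw [h] <;> norm_num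
  -- degree and leading coefficient facts
  have hdeg : ∀ k, k ≤ n →
      (a k ≠ 0 ∧ (a k).natDegree = k ∧ (a k).leadingCoeff = P k) ∧
      (1 ≤ k → (b k ≠ 0 ∧ (b k).natDegree = k - 1 ∧ (b k).leadingCoeff = ε k * P (k-1))) := by
    intro k
    induction k with
    | zero =>
      intro _
      refine ⟨⟨by rw [ha0]; exact one_ne_zero, by simp [ha0], by simp [ha0, hPdef]⟩, by omega⟩
    | succ m ih =>
      intro hmn
      obtain ⟨⟨hane, hadeg, halead⟩, hbpart⟩ := ih (by omega)
      have hm1 : 1 ≤ m + 1 := by omega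
      have harec := ha (m+1) hm1 hmn
      have hbrec := hb (m+1) hm1 hmn
      simp only [Nat.add_sub_cancel] at harec hbrec
      have hδ0 : ε (m+1) * η (m+1) ≠ 0 := mul_ne_zero (hε0 _) (hη0 _)
      have ht1 : (1 : ℝ[X]) + C (ε (m+1) * η (m+1)) * X
          = C (ε (m+1) * η (m+1)) * X + C 1 := by rw [Polynomial.C_1]; ring
      have ht1deg : ((1 : ℝ[X]) + C (ε (m+1) * η (m+1)) * X).natDegree = 1 := by
        rw [ht1]; exact Polynomial.natDegree_linear hδ0
      have ht1lead : ((1 : ℝ[X]) + C (ε (m+1) * η (m+1)) * X).leadingCoeff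
          = ε (m+1) * η (m+1) := by
        rw [ht1]; exact Polynomial.leadingCoeff_linear hδ0
      have ht1ne : (1 : ℝ[X]) + C (ε (m+1) * η (m+1)) * X ≠ 0 := by
        intro h
        rw [h] at ht1deg
        simp at ht1deg
      rcases Nat.eq_zero_or_pos m with rfl | hm
      · -- m = 0 : a 1 = 1 + C δ X, b 1 = C (ε 1)
        have ha1 : a 1 = 1 + C (ε 1 * η 1) * X := by
          rw [harec, ha0, hb0]; ring
        have hb1 : b 1 = C (ε 1) := by
          rw [hbrec, ha0, hb0]; ring
        have hP1 : P 1 = ε 1 * η 1 := by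
          rw [show (1:ℕ) = 0 + 1 from rfl, hPsucc 0]
          simp [hPdef]
        refine ⟨⟨by rw [ha1]; exact ht1ne, by rw [ha1, ht1deg], by rw [ha1, ht1lead, hP1]⟩,
          fun _ => ⟨?_, ?_, ?_⟩⟩
        · rw [hb1]; exact fun h => hε0 1 (by simpa using h)
        · rw [hb1]; simp
        · rw [hb1]; simp [hPdef, Polynomial.leadingCoeff_C]
      · -- m ≥ 1
        obtain ⟨hbne, hbdeg, hblead⟩ := hbpart hm
        -- a (m+1)
        have hterm1deg : (((1 : ℝ[X]) + C (ε (m+1) * η (m+1)) * X) * a m).natDegree = m + 1 := by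
          rw [Polynomial.natDegree_mul ht1ne hane, ht1deg, hadeg]; omega
        have hterm1ne : ((1 : ℝ[X]) + C (ε (m+1) * η (m+1)) * X) * a m ≠ 0 :=
          mul_ne_zero ht1ne hane
        have hterm1lead : (((1 : ℝ[X]) + C (ε (m+1) * η (m+1)) * X) * a m).leadingCoeff
            = P (m+1) := by
          rw [Polynomial.leadingCoeff_mul, ht1lead, halead, hPsucc]; ring
        have hCXne : C (η (m+1)) * X ≠ 0 := by
          intro h
          have := Polynomial.natDegree_C_mul_X (η (m+1)) (hη0 _)
          rw [h] at this; simp at this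
        have hterm2deg : ((C (η (m+1)) * X) * b m).natDegree = m := by
          rw [Polynomial.natDegree_mul hCXne hbne,
            Polynomial.natDegree_C_mul_X _ (hη0 _), hbdeg]; omega
        have hterm2lt : ((C (η (m+1)) * X) * b m).degree
            < (((1 : ℝ[X]) + C (ε (m+1) * η (m+1)) * X) * a m).degree := by
          rw [Polynomial.degree_eq_natDegree (mul_ne_zero hCXne hbne),
            Polynomial.degree_eq_natDegree hterm1ne, hterm1deg, hterm2deg]
          exact_mod_cast Nat.lt_succ_self m
        have hadeg' : (a (m+1)).natDegree = m + 1 := by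
          rw [harec, Polynomial.natDegree_add_eq_left_of_degree_lt hterm2lt, hterm1deg]
        have halead' : (a (m+1)).leadingCoeff = P (m+1) := by
          rw [harec, add_comm, Polynomial.leadingCoeff_add_of_degree_lt hterm2lt, hterm1lead]
        have hane' : a (m+1) ≠ 0 := by
          intro h
          rw [h] at halead'
          exact hP0 (m+1) (by simpa using halead'.symm)
        -- b (m+1)
        have hCane : C (ε (m+1)) * a m ≠ 0 := mul_ne_zero (by
          intro h
          exact hε0 (m+1) (by simpa using h)) hane
        have hbt1deg : (C (ε (m+1)) * a m).natDegree = m := by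
          rw [Polynomial.natDegree_mul (by
            intro h; exact hε0 (m+1) (by simpa using h)) hane]
          simp [hadeg]
        have hbt2lt : (b m).degree < (C (ε (m+1)) * a m).degree := by
          rw [Polynomial.degree_eq_natDegree hbne, Polynomial.degree_eq_natDegree hCane,
            hbt1deg, hbdeg]
          exact_mod_cast (by omega : m - 1 < m)
        have hbdeg' : (b (m+1)).natDegree = m := by
          rw [hbrec, Polynomial.natDegree_add_eq_left_of_degree_lt hbt2lt, hbt1deg]
        have hblead' : (b (m+1)).leadingCoeff = ε (m+1) * P m := by
          rw [hbrec, add_comm, Polynomial.leadingCoeff_add_of_degree_lt hbt2lt,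
            Polynomial.leadingCoeff_mul, Polynomial.leadingCoeff_C, halead]
        have hbne' : b (m+1) ≠ 0 := by
          intro h
          rw [h] at hblead'
          exact mul_ne_zero (hε0 (m+1)) (hP0 m) (by simpa using hblead'.symm)
        exact ⟨⟨hane', hadeg', halead'⟩, fun _ => ⟨hbne', by simpa using hbdeg', by
          simpa using hblead'⟩⟩
  -- main index computation
  have hind : ∀ k, 1 ≤ k → k ≤ n → ind2 (a k) (b k) = 2 * ∑ i ∈ Finset.Icc 1 k, η i := by
    intro k hk1
    induction k, hk1 using Nat.le_induction with
    | base =>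
      intro h1n
      have ha1 : a 1 = 1 + C (ε 1 * η 1) * X := by
        rw [ha 1 le_rfl h1n, ha0, hb0]; ring
      have hb1 : b 1 = C (ε 1) := by
        rw [hb 1 le_rfl h1n, ha0, hb0]; ring
      obtain ⟨⟨hane, hadeg, halead⟩, hbpart⟩ := hdeg 1 h1n
      obtain ⟨hbne, hbdeg, hblead⟩ := hbpart le_rfl
      have hroots : (b 1).roots.toFinset = ∅ := by
        rw [hb1, Polynomial.roots_C]; simp
      have h0 : ind2 (b 1) (a 1) = 0 := ind2_def _ _ hroots
      have hR := recip (a 1) (b 1) hane hbne (hnv 1 h1n)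
      rw [h0, add_zero] at hR
      have hqdeg : ((a 1) * (b 1)).natDegree = 1 := by
        rw [Polynomial.natDegree_mul hane hbne, hadeg, hbdeg]
      have hqlead : ((a 1) * (b 1)).leadingCoeff = η 1 := by
        rw [Polynomial.leadingCoeff_mul, halead, hblead]
        simp only [hPdef]
        have : (Finset.Icc 1 1 : Finset ℕ) = {1} := Finset.Icc_self 1
        rw [this]
        simp only [Finset.prod_singleton, Finset.Icc_self]
        have h10 : (1:ℕ) - 1 = 0 := rfl
        rw [h10]
        simp [show (Finset.Icc 1 0 : Finset ℕ) = ∅ from rfl]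
        rcases hε 1 with h | h <;> rw [h] <;> ring
      rw [hR, hqdeg, hqlead]
      have : SG (η 1) = η 1 := by
        rcases hη 1 with h | h <;> rw [h] <;> [exact SG_one; exact SG_negone]
      rw [this]
      rw [Finset.Icc_self, Finset.sum_singleton]
      ring
    | succ m hm ihm =>
      intro hm1n
      have hmn : m ≤ n := by omega
      have IH := ihm hmn
      obtain ⟨⟨hamne, hamdeg, hamlead⟩, hbm⟩ := hdeg m hmn
      obtain ⟨hbmne, hbmdeg, hbmlead⟩ := hbm hm
      obtain ⟨⟨hane, hadeg, halead⟩, hbp⟩ := hdeg (m+1) hm1n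
      obtain ⟨hbne, hbdeg, hblead⟩ := hbp (by omega)
      have harec := ha (m+1) (by omega) hm1n
      have hbrec := hb (m+1) (by omega) hm1n
      simp only [Nat.add_sub_cancel] at harec hbrec
      have hbId : b (m+1) = b m + C (ε (m+1)) * a m := by rw [hbrec]; ring
      have haId : a (m+1) = a m + (C (η (m+1)) * X) * b (m+1) := by
        rw [harec, hbId, Polynomial.C_mul]; ring
      -- no-common-root facts
      have hcoK : ∀ r : ℝ, ¬((a m).eval r = 0 ∧ (b m).eval r = 0) := hnv m hmn
      have hcoK1 : ∀ r : ℝ, ¬((a (m+1)).eval r = 0 ∧ (b (m+1)).eval r = 0) := hnv (m+1) hm1n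
      have hcoBA : ∀ r : ℝ, (b (m+1)).eval r = 0 → (a m).eval r ≠ 0 := by
        intro r h1 h2
        apply hcoK r
        refine ⟨h2, ?_⟩
        have := hbId
        have : (b (m+1)).eval r = (b m).eval r + ε (m+1) * (a m).eval r := by
          rw [hbId]; simp
        rw [h1, h2] at this
        linarith
      -- R1
      have hR1 := recip (a (m+1)) (b (m+1)) hane hbne hcoK1
      have hq1deg : ((a (m+1)) * (b (m+1))).natDegree = 2*m + 1 := by
        rw [Polynomial.natDegree_mul hane hbne, hadeg, hbdeg]; omega
      have hq1lead : ((a (m+1)) * (b (m+1))).leadingCoeff = η (m+1) := by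
        rw [Polynomial.leadingCoeff_mul, halead, hblead, hPsucc]
        simp only [Nat.add_sub_cancel]
        have e1 : P m * (ε (m+1) * η (m+1)) * (ε (m+1) * P m)
            = (P m * P m) * (ε (m+1) * ε (m+1)) * η (m+1) := by ring
        rw [e1, hP2, hε2]; ring
      have hSGη : SG (η (m+1)) = η (m+1) := by
        rcases hη (m+1) with h | h <;> rw [h] <;> [exact SG_one; exact SG_negone]
      rw [hq1deg, hq1lead, hSGη, Odd.neg_one_pow ⟨m, by ring⟩] at hR1
      -- I1 : ind2 (b (m+1)) (a (m+1)) = ind2 (b (m+1)) (a m)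
      have hI1 : ind2 (b (m+1)) (a (m+1)) = ind2 (b (m+1)) (a m) := by
        have := ind2_add_mul (b (m+1)) (a m) (C (η (m+1)) * X) hbne hamne
          (haId ▸ hane) hcoBA
        rw [← haId] at this
        exact this
      -- R2
      have hcoBA' : ∀ r : ℝ, ¬((b (m+1)).eval r = 0 ∧ (a m).eval r = 0) := by
        intro r ⟨h1, h2⟩; exact hcoBA r h1 h2
      have hR2 := recip (b (m+1)) (a m) hbne hamne hcoBA'
      have hq2deg : ((b (m+1)) * (a m)).natDegree = 2*m := by
        rw [Polynomial.natDegree_mul hbne hamne, hbdeg, hamdeg]; omega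
      rw [hq2deg, Even.neg_one_pow ⟨m, by ring⟩] at hR2
      have hR2' : ind2 (b (m+1)) (a m) = - ind2 (a m) (b (m+1)) := by linarith
      -- I2
      have hI2 : ind2 (a m) (b (m+1)) = ind2 (a m) (b m) := by
        have := ind2_add_mul (a m) (b m) (C (ε (m+1))) hamne hbmne
          (hbId ▸ hbne) (fun r h1 h2 => hcoK r ⟨h1, h2⟩)
        rw [← hbId] at this
        exact this
      rw [Finset.sum_Icc_succ_top (by omega : 1 ≤ m + 1)]
      rw [hI1, hR2', hI2, IH] at hR1
      linarith
  -- conclusion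
  obtain ⟨⟨hane, _, _⟩, hbp⟩ := hdeg n le_rfl
  obtain ⟨hbne, _, _⟩ := hbp hn
  have hfin := hind n hn le_rfl
  have habs := abs_ind2_le (a n) (b n) hane hbne
  rw [hfin] at habs
  have hsum : ∑ k ∈ Finset.Icc 1 n, ε k = ∑ k ∈ Finset.Icc 1 n, η k := by
    refine Finset.sum_nbij' (fun i => n + 1 - i) (fun j => n + 1 - j) ?_ ?_ ?_ ?_ ?_
    · intro i hi; simp only [Finset.mem_Icc] at hi ⊢; omega
    · intro j hj; simp only [Finset.mem_Icc] at hj ⊢; omega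
    · intro i hi; simp only [Finset.mem_Icc] at hi; show n + 1 - (n + 1 - i) = i; omega
    · intro j hj; simp only [Finset.mem_Icc] at hj; show n + 1 - (n + 1 - j) = j; omega
    · intro i hi; rw [Finset.mem_Icc] at hi; exact hpal i hi.1 hi.2
  rw [hsum]
  rw [abs_mul, abs_two] at habs
  have := abs_nonneg (∑ k ∈ Finset.Icc 1 n, η k)
  linarith
end

section
/- Let f: ℝ → ℤ map each real x avoiding the roots of polynomials f₀,...,fₙ to the number of sign changes in (f₀(x),...,fₙ(x)). If f₀,...,fₙ are nonzero polynomials and Z is the finite union of their real root sets, then v(x) = var(f₀(x),...,fₙ(x)) is locally constant on ℝ \ Z. -/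
open Polynomial Finset

theorem stmt_13 (n : ℕ) (f : ℕ → Polynomial ℝ)
    (hf : ∀ k ≤ n, f k ≠ 0)
    (Z : Set ℝ) (hZ : Z = {x : ℝ | ∃ k ≤ n, (f k).eval x = 0})
    (x : ℝ) (hx : x ∉ Z) :
    ∃ δ > 0, ∀ y : ℝ, |y - x| < δ →
      ((Finset.range n).filter (fun k => (f k).eval y * (f (k+1)).eval y < 0)).card =
      ((Finset.range n).filter (fun k => (f k).eval x * (f (k+1)).eval x < 0)).card := by
  have hx0 : ∀ k ≤ n, (f k).eval x ≠ 0 := by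
    intro k hk h0
    exact hx (by rw [hZ]; exact ⟨k, hk, h0⟩)
  have hmem : ∀ k ∈ Finset.Iic n, {y : ℝ | (f k).eval y * (f k).eval x > 0} ∈ nhds x := by
    intro k hk
    have hc : Continuous fun y : ℝ => (f k).eval y * (f k).eval x :=
      (Polynomial.continuous _).mul continuous_const
    have hopen : IsOpen {y : ℝ | (f k).eval y * (f k).eval x > 0} :=
      isOpen_lt continuous_const hc
    exact hopen.mem_nhds (mul_self_pos.2 (hx0 k (Finset.mem_Iic.1 hk)))
  have hinter : (⋂ k ∈ Finset.Iic n, {y : ℝ | (f k).eval y * (f k).eval x > 0}) ∈ nhds x :=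
    (Filter.biInter_finset_mem _).2 hmem
  obtain ⟨δ, hδ, hball⟩ := Metric.mem_nhds_iff.1 hinter
  refine ⟨δ, hδ, fun y hy => ?_⟩
  have hyb : y ∈ ⋂ k ∈ Finset.Iic n, {y : ℝ | (f k).eval y * (f k).eval x > 0} :=
    hball (by simpa [Metric.mem_ball, Real.dist_eq] using hy)
  have hsign : ∀ k ≤ n, (f k).eval y * (f k).eval x > 0 := by
    intro k hk
    have := Set.mem_iInter₂.1 hyb k (Finset.mem_Iic.2 hk)
    exact this
  congr 1
  apply Finset.filter_congr
  intro k hk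
  have hkn : k < n := Finset.mem_range.1 hk
  have h1 := hsign k hkn.le
  have h2 := hsign (k + 1) hkn
  constructor
  · intro h; nlinarith [mul_pos h1 h2]
  · intro h; nlinarith [mul_pos h1 h2]
end

section
/- Let f₀,...,fₙ be real polynomials with f₀ a nonzero constant, satisfying: whenever fₖ(x₀) = 0 for 0 < k < n, then f_{k-1}(x₀)·f_{k+1}(x₀) < 0. Let x₀ be a real root of some fₖ with 0 < k < n but not a root of fₙ. Then there exists δ > 0 such that var(f(x)) is the same for all x in (x₀ - δ, x₀ + δ) \ Z, where Z is the set of all real roots of f₀,...,fₙ and var counts sign changes after deleting zero entries. -/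
open Polynomial Finset

private lemma sign_iff' {a b : ℝ} (h : 0 < a * b) : a < 0 ↔ b < 0 := by
  constructor <;> intro h' <;> nlinarith

private lemma xor_iff' {a b c : ℝ} (hac : a * c < 0) (hb : b ≠ 0) :
    b * c < 0 ↔ ¬ (a * b < 0) := by
  have hb2 : 0 < b * b := mul_self_pos.mpr hb
  constructor
  · intro h1 h2; nlinarith
  · intro h1
    rcases (not_lt.mp h1).lt_or_eq with h2 | h2
    · nlinarith
    · nlinarith

theorem stmt_15 (n : ℕ) (f : ℕ → Polynomial ℝ)
    (h0 : ∃ c : ℝ, c ≠ 0 ∧ f 0 = Polynomial.C c)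
    (h2 : ∀ k : ℕ, 0 < k → k < n → ∀ x₀ : ℝ, (f k).eval x₀ = 0 →
      (f (k-1)).eval x₀ * (f (k+1)).eval x₀ < 0)
    (Z : Set ℝ) (hZ : Z = {x : ℝ | ∃ k ≤ n, (f k).eval x = 0})
    (x₀ : ℝ) (k : ℕ) (hk1 : 0 < k) (hk2 : k < n)
    (hroot : (f k).eval x₀ = 0) (hn : (f n).eval x₀ ≠ 0) :
    ∃ δ > 0, ∀ x ∈ Set.Ioo (x₀ - δ) (x₀ + δ), ∀ y ∈ Set.Ioo (x₀ - δ) (x₀ + δ),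
      x ∉ Z → y ∉ Z →
      ((Finset.range n).filter (fun j => (f j).eval x * (f (j+1)).eval x < 0)).card =
      ((Finset.range n).filter (fun j => (f j).eval y * (f (j+1)).eval y < 0)).card := by
  classical
  obtain ⟨c, hc, hf0⟩ := h0
  have h00 : ∀ x : ℝ, (f 0).eval x ≠ 0 := by intro x; rw [hf0]; simpa using hc
  -- eventually, all polynomials nonzero at x₀ keep their sign
  have hev : ∀ᶠ x in nhds x₀, ∀ j ∈ Finset.range (n+1),
      (f j).eval x₀ ≠ 0 → 0 < (f j).eval x * (f j).eval x₀ := by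
    rw [Filter.eventually_all_finset]
    intro j _
    by_cases hj0 : (f j).eval x₀ = 0
    · filter_upwards with x h; exact absurd hj0 h
    · have h1 : ∀ᶠ x in nhds x₀, (0:ℝ) < (f j).eval x * (f j).eval x₀ :=
        ContinuousAt.eventually_lt continuousAt_const
          (((f j).continuous.mul continuous_const).continuousAt)
          (mul_self_pos.mpr hj0)
      filter_upwards [h1] with x hx _; exact hx
  obtain ⟨δ, hδpos, hδ⟩ := Metric.eventually_nhds_iff.mp hev
  refine ⟨δ, hδpos, ?_⟩
  -- the key counting lemma
  have key : ∀ x : ℝ, x ∉ Z →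
      (∀ j ∈ Finset.range (n+1), (f j).eval x₀ ≠ 0 → 0 < (f j).eval x * (f j).eval x₀) →
      ((Finset.range n).filter (fun j => (f j).eval x * (f (j+1)).eval x < 0)).card =
      ((Finset.range n).filter (fun j => ((f j).eval x₀ ≠ 0 ∧ (f (j+1)).eval x₀ ≠ 0) ∧
          (f j).eval x₀ * (f (j+1)).eval x₀ < 0)).card +
      ((Finset.range n).filter (fun j => (f (j+1)).eval x₀ = 0)).card := by
    intro x hxZ hsgn0
    have hxne : ∀ j, j ≤ n → (f j).eval x ≠ 0 := by
      intro j hj hj0; exact hxZ (by rw [hZ]; exact ⟨j, hj, hj0⟩)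
    have hsgn : ∀ j, j ≤ n → (f j).eval x₀ ≠ 0 → 0 < (f j).eval x * (f j).eval x₀ :=
      fun j hj => hsgn0 j (mem_range.mpr (Nat.lt_succ_of_le hj))
    set p : ℕ → Prop := fun j => (f j).eval x * (f (j+1)).eval x < 0 with hp
    set A := (range n).filter (fun j => (f j).eval x₀ ≠ 0 ∧ (f (j+1)).eval x₀ ≠ 0) with hA
    set B := (range n).filter (fun j => (f (j+1)).eval x₀ = 0) with hB
    set C := (range n).filter (fun j => (f j).eval x₀ = 0) with hC
    have hU : A ∪ (B ∪ C) = range n := by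
      ext j
      simp only [hA, hB, hC, Finset.mem_union, Finset.mem_filter]
      constructor
      · rintro (h | h | h) <;> exact h.1
      · intro hj; by_cases hz1 : (f j).eval x₀ = 0
        · exact Or.inr (Or.inr ⟨hj, hz1⟩)
        · by_cases hz2 : (f (j+1)).eval x₀ = 0
          · exact Or.inr (Or.inl ⟨hj, hz2⟩)
          · exact Or.inl ⟨hj, hz1, hz2⟩
    have hd2 : Disjoint B C := by
      rw [Finset.disjoint_left]
      intro j hjB hjC
      simp only [hB, hC, Finset.mem_filter, Finset.mem_range] at hjB hjC
      have hj1 : j + 1 < n := by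
        rcases lt_or_eq_of_le (Nat.succ_le_of_lt hjB.1) with h | h
        · exact h
        · exact absurd (h ▸ hjB.2) hn
      have := h2 (j+1) (Nat.succ_pos j) hj1 x₀ hjB.2
      rw [Nat.add_sub_cancel, hjC.2, zero_mul] at this
      exact lt_irrefl 0 this
    have hd1 : Disjoint A (B ∪ C) := by
      rw [Finset.disjoint_left]
      intro j hjA hjBC
      simp only [hA, Finset.mem_filter] at hjA
      rcases Finset.mem_union.mp hjBC with h | h <;>
        simp only [hB, hC, Finset.mem_filter] at h
      · exact hjA.2.2 h.2
      · exact hjA.2.1 h.2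
    have hcard : ((range n).filter p).card =
        (A.filter p).card + ((B.filter p).card + (C.filter p).card) := by
      rw [← hU, Finset.filter_union,
        Finset.card_union_of_disjoint (Finset.disjoint_filter_filter hd1),
        Finset.filter_union,
        Finset.card_union_of_disjoint (Finset.disjoint_filter_filter hd2)]
    -- part A
    have hApart : A.filter p = A.filter (fun j => (f j).eval x₀ * (f (j+1)).eval x₀ < 0) := by
      apply Finset.filter_congr
      intro j hj
      simp only [hA, Finset.mem_filter, Finset.mem_range] at hj
      obtain ⟨hjn, hj1, hj2⟩ := hj
      have s1 := hsgn j (le_of_lt hjn) hj1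
      have s2 := hsgn (j+1) hjn hj2
      have : 0 < ((f j).eval x * (f (j+1)).eval x) * ((f j).eval x₀ * (f (j+1)).eval x₀) := by
        nlinarith
      simp only [hp, eq_iff_iff]
      exact sign_iff' this
    -- part B ∪ C
    have hCB : C = B.image (· + 1) := by
      ext j
      simp only [hB, hC, Finset.mem_image, Finset.mem_filter, Finset.mem_range]
      constructor
      · rintro ⟨hjn, hj0⟩
        have hj1 : 0 < j := Nat.pos_of_ne_zero (by rintro rfl; exact h00 x₀ hj0)
        obtain ⟨i, rfl⟩ : ∃ i, j = i + 1 := ⟨j - 1, (Nat.succ_pred_eq_of_pos hj1).symm⟩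
        exact ⟨i, ⟨Nat.lt_of_succ_lt hjn, hj0⟩, rfl⟩
      · rintro ⟨i, ⟨hin, hi0⟩, rfl⟩
        refine ⟨?_, hi0⟩
        rcases lt_or_eq_of_le (Nat.succ_le_of_lt hin) with h | h
        · exact h
        · exact absurd (h ▸ hi0) hn
    have hBxor : ∀ j ∈ B, (p (j+1) ↔ ¬ p j) := by
      intro j hjB
      simp only [hB, Finset.mem_filter, Finset.mem_range] at hjB
      have hj1 : j + 1 < n := by
        rcases lt_or_eq_of_le (Nat.succ_le_of_lt hjB.1) with h | h
        · exact h
        · exact absurd (h ▸ hjB.2) hn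
      have h02 := h2 (j+1) (Nat.succ_pos j) hj1 x₀ hjB.2
      rw [Nat.add_sub_cancel] at h02
      have hjne : (f j).eval x₀ ≠ 0 := fun h => by rw [h, zero_mul] at h02; exact lt_irrefl 0 h02
      have hj2ne : (f (j+2)).eval x₀ ≠ 0 := fun h => by
        rw [show j+1+1 = j+2 from rfl, h, mul_zero] at h02; exact lt_irrefl 0 h02
      have s1 := hsgn j (le_of_lt hjB.1) hjne
      have s2 := hsgn (j+2) hj1 hj2ne
      have hac : (f j).eval x * (f (j+2)).eval x < 0 := by nlinarith
      have hbne : (f (j+1)).eval x ≠ 0 := hxne (j+1) (le_of_lt hj1)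
      simp only [hp]
      exact xor_iff' hac hbne
    have hCpart : (C.filter p).card = (B.filter (fun j => ¬ p j)).card := by
      rw [hCB, Finset.filter_image,
        Finset.card_image_of_injective _ (add_left_injective 1)]
      congr 1
      exact Finset.filter_congr (by intro j hj; exact hBxor j hj)
    have hBCpart : (B.filter p).card + (C.filter p).card = B.card := by
      rw [hCpart]; exact Finset.card_filter_add_card_filter_not p
    rw [hcard, hBCpart, hApart, hA, Finset.filter_filter]
  -- finish
  intro x hx y hy hxZ hyZ
  have hdx : dist x x₀ < δ := by
    rw [Real.dist_eq, abs_lt]; constructor <;> [linarith [hx.1]; linarith [hx.2]]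
  have hdy : dist y x₀ < δ := by
    rw [Real.dist_eq, abs_lt]; constructor <;> [linarith [hy.1]; linarith [hy.2]]
  rw [key x hxZ (hδ hdx), key y hyZ (hδ hdy)]
end
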